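/- The group commutator of two elements of the Heisenberg-Weyl-parity group is [𝔇(α₁,β₁,γ₁,ν₁), 𝔇(α₂,β₂,γ₂,ν₂)] = D(2(α₁ν₂−α₂ν₁), 2(β₁ν₂−β₂ν₁), λ(ν₁,ν₂)(α₁β₂−α₂β₁)), where λ(0,0)=1 and λ(ν₁,ν₂)=−1 otherwise; in particular every such commutator lies in HW(d). -/

import Mathlib

open Matrix Complex BigOperators Finset Subgroup

noncomputable section

/-- The phase `ω(a) = exp(2πia/d)` for `a : ZMod d`. -/
def ω (d : ℕ) (a : ZMod d) : ℂ := Complex.exp (2 * Real.pi * Complex.I * (a.val : ℂ) / d)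

/-- The clock operator `Z`, with `Z|j⟩ = ω(j)|j⟩`. -/
def Zop (d : ℕ) : Matrix (ZMod d) (ZMod d) ℂ := Matrix.diagonal (fun j => ω d j)

/-- The shift operator `X`, with `X|j⟩ = |j+1⟩`. -/
def Xop (d : ℕ) : Matrix (ZMod d) (ZMod d) ℂ :=
  Matrix.of fun j k => if j = k + 1 then 1 else 0

/-- The finite Fourier transform, with entries `F_{jk} = ω(jk)/√d`. -/
def Fop (d : ℕ) : Matrix (ZMod d) (ZMod d) ℂ :=
  Matrix.of fun j k => ω d (j * k) / Real.sqrt d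

/-- `2⁻¹ = (d+1)/2` in `ZMod d` (for odd `d`). -/
def half (d : ℕ) : ZMod d := (((d + 1) / 2 : ℕ) : ZMod d)

/-- The general displacement operator `D(α,β,γ) = ω(γ - 2⁻¹αβ) Z^α X^β`. -/
def Dop (d : ℕ) [NeZero d] (α β γ : ZMod d) : Matrix (ZMod d) (ZMod d) ℂ :=
  ω d (γ - half d * (α * β)) • (Zop d ^ α.val * Xop d ^ β.val)

/-- The parity operator `P = F²`. -/
def Pop (d : ℕ) [NeZero d] : Matrix (ZMod d) (ZMod d) ℂ := Fop d ^ 2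

/-- The displacement-parity operator `𝔇(α,β,γ,ν) = D(α,β,γ) P^ν`. -/
def DPop (d : ℕ) [NeZero d] (α β γ : ZMod d) (ν : ZMod 2) : Matrix (ZMod d) (ZMod d) ℂ :=
  Dop d α β γ * Pop d ^ ν.val

/-- The sign `(-1)^ν` in `ZMod d`, for `ν : ZMod 2`. -/
def sgn (d : ℕ) (ν : ZMod 2) : ZMod d := (-1 : ZMod d) ^ ν.val

/-- The Heisenberg-Weyl group, as a subgroup of the units of the matrix ring,
generated by (in fact, consisting of) the displacement operators `D(α,β,γ)`. -/
def HW (d : ℕ) [NeZero d] : Subgroup (Matrix (ZMod d) (ZMod d) ℂ)ˣ :=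
  Subgroup.closure {u | ∃ α β γ : ZMod d, (u : Matrix (ZMod d) (ZMod d) ℂ) = Dop d α β γ}

/-- The subgroup of phases `ω(a)·1`. -/
def Phases (d : ℕ) [NeZero d] : Subgroup (Matrix (ZMod d) (ZMod d) ℂ)ˣ :=
  Subgroup.closure {u | ∃ a : ZMod d, (u : Matrix (ZMod d) (ZMod d) ℂ) = ω d a • (1 : Matrix (ZMod d) (ZMod d) ℂ)}

/-- The Heisenberg-Weyl-parity group, as a subgroup of the units of the matrix ring,
generated by (in fact, consisting of) the operators `𝔇(α,β,γ,ν)`. -/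
def HWP (d : ℕ) [NeZero d] : Subgroup (Matrix (ZMod d) (ZMod d) ℂ)ˣ :=
  Subgroup.closure {u | ∃ (α β γ : ZMod d) (ν : ZMod 2),
    (u : Matrix (ZMod d) (ZMod d) ℂ) = DPop d α β γ ν}

section Aux

set_option linter.unusedSectionVars false

variable (d : ℕ) [NeZero d]

def ζ : ℂ := Complex.exp (2 * Real.pi * Complex.I / d)

lemma zeta_pow_d : ζ d ^ d = 1 := by
  rw [ζ, ← Complex.exp_nat_mul]
  have hd : (d:ℂ) ≠ 0 := Nat.cast_ne_zero.mpr (NeZero.ne d)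
  rw [show (d:ℂ) * (2 * Real.pi * Complex.I / d) = 2 * Real.pi * Complex.I by
    field_simp, Complex.exp_two_pi_mul_I]

lemma ω_eq (a : ZMod d) : ω d a = ζ d ^ a.val := by
  rw [ω, ζ, ← Complex.exp_nat_mul]; ring_nf

lemma zeta_pow_mod (n : ℕ) : ζ d ^ n = ζ d ^ (n % d) := by
  conv_lhs => rw [← Nat.mod_add_div n d, pow_add, pow_mul, zeta_pow_d, one_pow, mul_one]

lemma ω_natCast (n : ℕ) : ω d (n : ZMod d) = ζ d ^ n := by
  rw [ω_eq, ZMod.val_natCast, ← zeta_pow_mod]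

lemma ω_add (a b : ZMod d) : ω d (a + b) = ω d a * ω d b := by
  have h : ((a.val + b.val : ℕ) : ZMod d) = a + b := by
    push_cast [ZMod.natCast_val, ZMod.cast_id]; rfl
  rw [← h, ω_natCast, pow_add, ← ω_eq, ← ω_eq]

lemma ω_zero : ω d 0 = 1 := by simp [ω]

lemma sum_val (f : ℕ → ℂ) : ∑ m : ZMod d, f m.val = ∑ i ∈ Finset.range d, f i := by
  rw [Finset.sum_nbij' (i := fun (m : ZMod d) => m.val) (j := fun i => (i : ZMod d))]
  · intro a _; exact Finset.mem_range.mpr (ZMod.val_lt a)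
  · intro a _; exact Finset.mem_univ _
  · intro a _; exact ZMod.natCast_rightInverse a
  · intro a ha; exact ZMod.val_natCast_of_lt (Finset.mem_range.mp ha)
  · intro a _; rfl

lemma sum_omega (a : ZMod d) :
    ∑ m : ZMod d, ω d (m * a) = if a = 0 then (d : ℂ) else 0 := by
  have key : ∀ m : ZMod d, ω d (m * a) = (ζ d ^ a.val) ^ m.val := by
    intro m
    have : m * a = ((m.val * a.val : ℕ) : ZMod d) := by
      push_cast [ZMod.natCast_val, ZMod.cast_id]; rfl
    rw [this, ω_natCast, mul_comm m.val, pow_mul]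
  simp_rw [key]
  rw [sum_val d (fun n => (ζ d ^ a.val) ^ n)]
  by_cases ha : a = 0
  · simp [ha]
  · rw [if_neg ha]
    have hprim : IsPrimitiveRoot (ζ d) d := Complex.isPrimitiveRoot_exp d (NeZero.ne d)
    have hne : ζ d ^ a.val ≠ 1 := by
      refine hprim.pow_ne_one_of_pos_of_lt ?_ (ZMod.val_lt a)
      exact (fun h => ha (by rwa [ZMod.val_eq_zero] at h))
    rw [geom_sum_eq hne]
    rw [← pow_mul, mul_comm, pow_mul, zeta_pow_d, one_pow, sub_self, zero_div]

lemma Xpow_apply (n : ℕ) (j k : ZMod d) :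
    (Xop d ^ n) j k = if j = k + (n : ZMod d) then 1 else 0 := by
  induction n generalizing k with
  | zero => simp [Matrix.one_apply]
  | succ n ih =>
    rw [pow_succ, Matrix.mul_apply]
    rw [Finset.sum_eq_single (k + 1)
      (fun m _ hm => by
        rw [show Xop d m k = if m = k + 1 then 1 else 0 from rfl, if_neg hm, mul_zero])
      (fun h => absurd (Finset.mem_univ _) h)]
    rw [show Xop d (k+1) k = if k + 1 = k + 1 then 1 else 0 from rfl, if_pos rfl, mul_one, ih]
    congr 1
    push_cast
    ring_nf

lemma ZX_apply (a b : ℕ) (j k : ZMod d) :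
    (Zop d ^ a * Xop d ^ b) j k
      = if j = k + (b : ZMod d) then ω d ((a : ZMod d) * j) else 0 := by
  rw [Zop, Matrix.diagonal_pow, Matrix.diagonal_mul, Xpow_apply]
  simp only [Pi.pow_apply]
  have : ω d j ^ a = ω d ((a : ZMod d) * j) := by
    have hj : (a : ZMod d) * j = ((a * j.val : ℕ) : ZMod d) := by
      push_cast [ZMod.natCast_val, ZMod.cast_id]; rfl
    rw [hj, ω_natCast, ω_eq, ← pow_mul, mul_comm]
  rw [mul_ite, mul_one, mul_zero, this]

lemma Dop_apply (α β γ j k : ZMod d) :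
    Dop d α β γ j k = if j = k + β then ω d (γ - half d * (α * β) + α * j) else 0 := by
  rw [Dop, Matrix.smul_apply, ZX_apply]
  simp only [ZMod.natCast_val, ZMod.cast_id]
  rw [smul_ite, smul_eq_mul, ← ω_add, smul_zero]

lemma Pop_apply (j k : ZMod d) : Pop d j k = if j + k = 0 then 1 else 0 := by
  have hd : (d : ℂ) ≠ 0 := Nat.cast_ne_zero.mpr (NeZero.ne d)
  rw [Pop, sq, Matrix.mul_apply]
  have : ∀ m : ZMod d, Fop d j m * Fop d m k = ω d (m * (j + k)) / d := by
    intro m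
    rw [Fop, Matrix.of_apply, Matrix.of_apply, div_mul_div_comm, ← ω_add,
      ← Complex.ofReal_mul, Real.mul_self_sqrt (Nat.cast_nonneg d)]
    norm_num
    congr 2
    ring
  simp_rw [this]
  rw [← Finset.sum_div, sum_omega]
  split_ifs with h
  · rw [div_self hd]
  · rw [zero_div]

lemma Pop_mul_apply (A : Matrix (ZMod d) (ZMod d) ℂ) (j k : ZMod d) :
    (Pop d * A) j k = A (-j) k := by
  rw [Matrix.mul_apply]
  rw [Finset.sum_eq_single (-j)
    (fun m _ hm => by
      rw [Pop_apply, if_neg (fun h => hm (by linear_combination h - j)), zero_mul])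
    (fun h => absurd (Finset.mem_univ _) h)]
  rw [Pop_apply, if_pos (by ring), one_mul]

lemma mul_Pop_apply (A : Matrix (ZMod d) (ZMod d) ℂ) (j k : ZMod d) :
    (A * Pop d) j k = A j (-k) := by
  rw [Matrix.mul_apply]
  rw [Finset.sum_eq_single (-k)
    (fun m _ hm => by
      rw [Pop_apply, if_neg (fun h => hm (by linear_combination h - k)), mul_zero])
    (fun h => absurd (Finset.mem_univ _) h)]
  rw [Pop_apply, if_pos (by ring), mul_one]

lemma Pop_mul_Pop : Pop d * Pop d = 1 := by
  ext j k
  rw [Pop_mul_apply, Pop_apply]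
  by_cases h : j = k
  · subst h; rw [if_pos (by ring), Matrix.one_apply_eq]
  · rw [if_neg (fun hc => h (by linear_combination -hc)), Matrix.one_apply_ne h]

lemma two_mul_half (hodd : Odd d) : (2 : ZMod d) * half d = 1 := by
  have he : 2 * ((d + 1) / 2) = d + 1 :=
    Nat.two_mul_div_two_of_even (Odd.add_one hodd)
  have : ((2 * ((d + 1) / 2) : ℕ) : ZMod d) = ((d + 1 : ℕ) : ZMod d) := by rw [he]
  push_cast at this
  simpa [half, ZMod.natCast_self] using this

lemma Pop_mul_Dop (α β γ : ZMod d) :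
    Pop d * Dop d α β γ = Dop d (-α) (-β) γ * Pop d := by
  ext j k
  rw [Pop_mul_apply, mul_Pop_apply, Dop_apply, Dop_apply]
  have hcond : (-j = k + β) = (j = -k + -β) := by
    apply propext; constructor
    · intro h; linear_combination -h
    · intro h; linear_combination -h
  simp only [hcond]
  congr 1
  ring_nf

lemma Dop_mul_Dop (hodd : Odd d) (α₁ β₁ γ₁ α₂ β₂ γ₂ : ZMod d) :
    Dop d α₁ β₁ γ₁ * Dop d α₂ β₂ γ₂
      = Dop d (α₁ + α₂) (β₁ + β₂) (γ₁ + γ₂ + half d * (α₁ * β₂ - α₂ * β₁)) := by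
  have h2 := two_mul_half d hodd
  ext j k
  rw [Matrix.mul_apply]
  rw [Finset.sum_eq_single (k + β₂)
    (fun m _ hm => by rw [Dop_apply d α₂ β₂ γ₂ m k, if_neg hm, mul_zero])
    (fun h => absurd (Finset.mem_univ _) h)]
  rw [Dop_apply, Dop_apply, Dop_apply, if_pos rfl]
  rw [ite_mul, zero_mul]
  have hcond : (j = k + β₂ + β₁) = (j = k + (β₁ + β₂)) := by
    apply propext; constructor
    · intro h; linear_combination h
    · intro h; linear_combination h
  simp only [hcond]
  by_cases h : j = k + (β₁ + β₂)
  · rw [if_pos h, if_pos h, ← ω_add]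
    congr 1
    subst h
    linear_combination (α₂ * β₁) * h2
  · rw [if_neg h, if_neg h]

lemma Dop_congr {α β γ α' β' γ' : ZMod d} (h1 : α = α') (h2 : β = β') (h3 : γ = γ') :
    Dop d α β γ = Dop d α' β' γ' := by rw [h1, h2, h3]

lemma Dop_zero : Dop d 0 0 0 = 1 := by
  ext j k
  simp only [Dop_apply, mul_zero, zero_mul, sub_zero, add_zero, ω_zero, Matrix.one_apply]

lemma Dop_mul_Dop_inv (hodd : Odd d) (α β γ : ZMod d) :
    Dop d α β γ * Dop d (-α) (-β) (-γ) = 1 := by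
  rw [Dop_mul_Dop d hodd,
    Dop_congr d (show α + -α = 0 by ring) (show β + -β = 0 by ring)
      (show γ + -γ + half d * (α * -β - -α * β) = 0 by ring), Dop_zero]

lemma Dop_inv (hodd : Odd d) (α β γ : ZMod d) :
    (Dop d α β γ)⁻¹ = Dop d (-α) (-β) (-γ) :=
  Matrix.inv_eq_right_inv (Dop_mul_Dop_inv d hodd α β γ)

lemma Pop_mul_Dop_assoc (α β γ : ZMod d) (M : Matrix (ZMod d) (ZMod d) ℂ) :
    Pop d * (Dop d α β γ * M) = Dop d (-α) (-β) γ * (Pop d * M) := by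
  rw [← mul_assoc, Pop_mul_Dop, mul_assoc]

lemma Pop_mul_Pop_assoc (M : Matrix (ZMod d) (ZMod d) ℂ) :
    Pop d * (Pop d * M) = M := by rw [← mul_assoc, Pop_mul_Pop, one_mul]

lemma Dop_mul_Dop_assoc (hodd : Odd d) (α₁ β₁ γ₁ α₂ β₂ γ₂ : ZMod d)
    (M : Matrix (ZMod d) (ZMod d) ℂ) :
    Dop d α₁ β₁ γ₁ * (Dop d α₂ β₂ γ₂ * M)
      = Dop d (α₁ + α₂) (β₁ + β₂) (γ₁ + γ₂ + half d * (α₁ * β₂ - α₂ * β₁)) * M := by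
  rw [← mul_assoc, Dop_mul_Dop d hodd]

lemma DP_inv (hodd : Odd d) (α β γ : ZMod d) :
    (Dop d α β γ * Pop d)⁻¹ = Dop d α β (-γ) * Pop d := by
  apply Matrix.inv_eq_right_inv
  rw [mul_assoc, ← mul_assoc (Pop d), Pop_mul_Dop, mul_assoc, Pop_mul_Pop, mul_one,
    Dop_mul_Dop d hodd,
    Dop_congr d (show α + -α = 0 by ring) (show β + -β = 0 by ring)
      (show γ + -γ + half d * (α * -β - -α * β) = 0 by ring), Dop_zero]

end Aux

/-- The group commutator of two elements of the Heisenberg-Weyl-parity group: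
`[𝔇(α₁,β₁,γ₁,ν₁), 𝔇(α₂,β₂,γ₂,ν₂)]
  = D(2(α₁ν₂-α₂ν₁), 2(β₁ν₂-β₂ν₁), λ(ν₁,ν₂)(α₁β₂-α₂β₁))`,
where `λ(0,0) = 1` and `λ(ν₁,ν₂) = -1` otherwise; in particular every such
commutator lies in `HW(d)`. -/
theorem HWP_commutator (d : ℕ) [NeZero d] (hodd : Odd d)
    (α₁ β₁ γ₁ α₂ β₂ γ₂ : ZMod d) (ν₁ ν₂ : ZMod 2) :
    DPop d α₁ β₁ γ₁ ν₁ * DPop d α₂ β₂ γ₂ ν₂ *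
        (DPop d α₁ β₁ γ₁ ν₁)⁻¹ * (DPop d α₂ β₂ γ₂ ν₂)⁻¹ =
      Dop d (2 * (α₁ * (ν₂.val : ZMod d) - α₂ * (ν₁.val : ZMod d)))
            (2 * (β₁ * (ν₂.val : ZMod d) - β₂ * (ν₁.val : ZMod d)))
            ((if ν₁ = 0 ∧ ν₂ = 0 then 1 else -1 : ZMod d) * (α₁ * β₂ - α₂ * β₁)) := by
  have h2 := two_mul_half d hodd
  rcases (show ν₁ = 0 ∨ ν₁ = 1 by revert ν₁; decide) with rfl | rfl <;>
    rcases (show ν₂ = 0 ∨ ν₂ = 1 by revert ν₂; decide) with rfl | rfl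
  · rw [if_pos (⟨rfl, rfl⟩ : (0:ZMod 2) = 0 ∧ (0:ZMod 2) = 0)]
    simp only [DPop, show ((0:ZMod 2)).val = 0 from rfl, pow_zero, mul_one, Nat.cast_zero]
    rw [Dop_inv d hodd, Dop_inv d hodd]
    simp only [mul_assoc, Dop_mul_Dop_assoc d hodd, Dop_mul_Dop d hodd]
    exact Dop_congr d (by ring) (by ring) (by linear_combination (α₁*β₂ - α₂*β₁) * h2)
  · rw [if_neg (by decide : ¬((0:ZMod 2) = 0 ∧ (1:ZMod 2) = 0))]
    simp only [DPop, show ((0:ZMod 2)).val = 0 from rfl, show ((1:ZMod 2)).val = 1 from rfl,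
      pow_zero, pow_one, mul_one, Nat.cast_zero, Nat.cast_one]
    rw [Dop_inv d hodd, DP_inv d hodd]
    simp only [mul_assoc, Pop_mul_Dop_assoc d, Pop_mul_Pop_assoc d, Pop_mul_Pop d, mul_one,
      Dop_mul_Dop_assoc d hodd, Dop_mul_Dop d hodd]
    exact Dop_congr d (by ring) (by ring) (by linear_combination (-(α₁*β₂ - α₂*β₁)) * h2)
  · rw [if_neg (by decide : ¬((1:ZMod 2) = 0 ∧ (0:ZMod 2) = 0))]
    simp only [DPop, show ((0:ZMod 2)).val = 0 from rfl, show ((1:ZMod 2)).val = 1 from rfl,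
      pow_zero, pow_one, mul_one, Nat.cast_zero, Nat.cast_one]
    rw [DP_inv d hodd, Dop_inv d hodd]
    simp only [mul_assoc, Pop_mul_Dop_assoc d, Pop_mul_Pop_assoc d, Pop_mul_Pop d, mul_one,
      Pop_mul_Dop d, Dop_mul_Dop_assoc d hodd, Dop_mul_Dop d hodd]
    exact Dop_congr d (by ring) (by ring) (by linear_combination (-(α₁*β₂ - α₂*β₁)) * h2)
  · rw [if_neg (by decide : ¬((1:ZMod 2) = 0 ∧ (1:ZMod 2) = 0))]
    simp only [DPop, show ((1:ZMod 2)).val = 1 from rfl, pow_one, Nat.cast_one]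
    rw [DP_inv d hodd, DP_inv d hodd]
    simp only [mul_assoc, Pop_mul_Dop_assoc d, Pop_mul_Pop_assoc d, Pop_mul_Pop d, mul_one,
      Pop_mul_Dop d, Dop_mul_Dop_assoc d hodd, Dop_mul_Dop d hodd]
    exact Dop_congr d (by ring) (by ring) (by linear_combination (-(α₁*β₂ - α₂*β₁)) * h2)
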